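/- If D is a (k,λ)-list dominating set of the complement Ḡ of a graph G on n vertices, then the induced subgraph G[V \ D] has density γ satisfying (C(n-k',2) - λ/2)/C(n-k',2) ≤ γ ≤ 1 where k' = |D| ≤ k, with density defined as the ratio of the number of edges to C(|V\D|,2). -/

import Mathlib

open Finset

theorem stmt_4 {V : Type*} [Fintype V] [DecidableEq V]
    (G : SimpleGraph V) [DecidableRel G.Adj]
    (s : V → ℕ) (k lam : ℕ)
    (hs : ∀ v, s v < Gᶜ.degree v)
    (D : Finset V)
    (hcard : D.card ≤ k)
    (hdom : ∀ v, v ∉ D → Gᶜ.degree v - s v ≤ (Gᶜ.neighborFinset v ∩ D).card)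
    (hsum : ∑ v ∈ Finset.univ \ D, s v ≤ lam)
    (n k' : ℕ) (hn : Fintype.card V = n) (hk' : D.card = k') :
    ((((n - k').choose 2 : ℚ) - (lam : ℚ) / 2) / ((n - k').choose 2 : ℚ) ≤
      ((G.edgeFinset.filter (fun e => ∀ v ∈ e, v ∉ D)).card : ℚ) /
        (((Finset.univ \ D).card.choose 2 : ℚ))) ∧
    (((G.edgeFinset.filter (fun e => ∀ v ∈ e, v ∉ D)).card : ℚ) /
        (((Finset.univ \ D).card.choose 2 : ℚ)) ≤ 1) := by
  classical
  set W : Finset V := Finset.univ \ D with hW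
  have hmemW : ∀ v, v ∈ W ↔ v ∉ D := by intro v; simp [hW]
  -- the induced graph on W
  set H : SimpleGraph (↑W : Set V) := G.induce (↑W : Set V) with hH
  haveI : DecidableRel H.Adj := by rw [hH]; exact fun a b => inferInstanceAs (Decidable (G.Adj a b))
  have hcardW : Fintype.card ↥(↑W : Set V) = W.card := by simp
  have hnk : n - k' = W.card := by
    rw [← hn, ← hk', hW, Finset.card_sdiff_of_subset (Finset.subset_univ D), Finset.card_univ]
  -- the filtered edge set is the image of H's edges
  have himg : H.edgeFinset.image (Sym2.map (↑· : (↑W : Set V) → V))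
      = G.edgeFinset.filter (fun e => ∀ v ∈ e, v ∉ D) := by
    ext e
    constructor
    · intro he
      rcases Finset.mem_image.mp he with ⟨e', he', rfl⟩
      induction e' using Sym2.ind with
      | _ a b =>
        simp only [hH, SimpleGraph.mem_edgeFinset, SimpleGraph.mem_edgeSet] at he'
        simp only [Sym2.map_pair_eq, Finset.mem_filter, SimpleGraph.mem_edgeFinset,
          SimpleGraph.mem_edgeSet, Sym2.mem_iff]
        refine ⟨he', ?_⟩
        rintro v (rfl | rfl)
        · exact (hmemW _).mp a.2
        · exact (hmemW _).mp b.2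
    · intro he
      induction e using Sym2.ind with
      | _ a b =>
        simp only [Finset.mem_filter, SimpleGraph.mem_edgeFinset, SimpleGraph.mem_edgeSet,
          Sym2.mem_iff] at he
        have ha : a ∈ W := (hmemW _).mpr (he.2 a (Or.inl rfl))
        have hb : b ∈ W := (hmemW _).mpr (he.2 b (Or.inr rfl))
        refine Finset.mem_image.mpr ⟨s(⟨a, ha⟩, ⟨b, hb⟩), ?_, rfl⟩
        simpa [hH, SimpleGraph.mem_edgeFinset, SimpleGraph.mem_edgeSet] using he.1
  have hEcard : (G.edgeFinset.filter (fun e => ∀ v ∈ e, v ∉ D)).card = H.edgeFinset.card := by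
    rw [← himg, Finset.card_image_of_injective _ (Sym2.map.injective Subtype.val_injective)]
  -- partition of all pairs in W into H-edges and Hᶜ-edges
  have hpart : H.edgeFinset.card + Hᶜ.edgeFinset.card = W.card.choose 2 := by
    have hu : H.edgeFinset ∪ Hᶜ.edgeFinset = (⊤ : SimpleGraph ↥(↑W : Set V)).edgeFinset := by
      ext e
      induction e using Sym2.ind with
      | _ a b =>
        simp only [SimpleGraph.mem_edgeFinset, Finset.mem_union, SimpleGraph.mem_edgeSet,
          SimpleGraph.compl_adj, SimpleGraph.top_adj]
        constructor
        · rintro (h | h)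
          · exact h.ne
          · exact h.1
        · intro h
          by_cases hA : H.Adj a b
          · exact Or.inl hA
          · exact Or.inr ⟨h, hA⟩
    have hd : Disjoint H.edgeFinset Hᶜ.edgeFinset := by
      rw [Finset.disjoint_left]
      intro e he he'
      induction e using Sym2.ind with
      | _ a b =>
        simp only [SimpleGraph.mem_edgeFinset, SimpleGraph.mem_edgeSet,
          SimpleGraph.compl_adj] at he he'
        exact he'.2 he
    rw [← hcardW, ← SimpleGraph.card_edgeFinset_top_eq_card_choose_two, ← hu,
      Finset.card_union_of_disjoint hd]
  -- degrees in Hᶜ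
  have hdeg : ∀ (v : V) (hv : v ∈ (↑W : Set V)), Hᶜ.degree ⟨v, hv⟩ ≤ s v := by
    intro v hv
    have hvW : v ∈ W := hv
    have hvD : v ∉ D := (hmemW v).mp hvW
    have hmap : (Hᶜ.neighborFinset ⟨v, hv⟩).map (Function.Embedding.subtype _)
        = Gᶜ.neighborFinset v ∩ W := by
      ext u
      simp only [Finset.mem_map, SimpleGraph.mem_neighborFinset, Function.Embedding.coe_subtype,
        SimpleGraph.compl_adj, Finset.mem_inter, hH, SimpleGraph.comap_adj, Subtype.exists]
      constructor
      · rintro ⟨u', hu', ⟨hne, hna⟩, rfl⟩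
        exact ⟨⟨fun h => hne (Subtype.ext h), hna⟩, hu'⟩
      · rintro ⟨⟨hne, hna⟩, hu⟩
        exact ⟨u, hu, ⟨fun h => hne (congrArg Subtype.val h), hna⟩, rfl⟩
    have h1 : Hᶜ.degree ⟨v, hv⟩ = (Gᶜ.neighborFinset v ∩ W).card := by
      rw [← hmap, Finset.card_map]; rfl
    have h2 : Gᶜ.neighborFinset v ∩ W = Gᶜ.neighborFinset v \ D := by
      ext u; simp [hW, Finset.mem_sdiff]
    have h3 : (Gᶜ.neighborFinset v \ D).card
        = (Gᶜ.neighborFinset v).card - (Gᶜ.neighborFinset v ∩ D).card := by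
      rw [← Finset.card_inter_add_card_sdiff (Gᶜ.neighborFinset v) D]
      omega
    have h4 : (Gᶜ.neighborFinset v ∩ D).card ≤ (Gᶜ.neighborFinset v).card :=
      Finset.card_le_card (Finset.inter_subset_left)
    have h5 := hdom v hvD
    have h6 : (Gᶜ.neighborFinset v).card = Gᶜ.degree v := rfl
    have h7 := hs v
    rw [h1, h2, h3, h6]
    omega
  -- handshake for Hᶜ
  have hhand : ∑ v : ↥(↑W : Set V), Hᶜ.degree v = 2 * Hᶜ.edgeFinset.card :=
    SimpleGraph.sum_degrees_eq_twice_card_edges _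
  have hbound : 2 * Hᶜ.edgeFinset.card ≤ lam := by
    rw [← hhand]
    calc ∑ v : ↥(↑W : Set V), Hᶜ.degree v ≤ ∑ v : ↥(↑W : Set V), s v.1 :=
          Finset.sum_le_sum fun v _ => hdeg v.1 v.2
      _ = ∑ v ∈ W, s v := by
          exact (Finset.sum_subtype W (fun x => Iff.rfl) s).symm
      _ ≤ lam := hsum
  -- now the rational arithmetic
  have hsumEdges : (G.edgeFinset.filter (fun e => ∀ v ∈ e, v ∉ D)).card + Hᶜ.edgeFinset.card
      = W.card.choose 2 := by rw [hEcard]; exact hpart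
  rw [hnk]
  by_cases hC : (W.card.choose 2 : ℚ) = 0
  · rw [hC]
    norm_num
  · have hCpos : (0 : ℚ) < (W.card.choose 2 : ℚ) := by
      rcases lt_or_eq_of_le (Nat.cast_nonneg (W.card.choose 2) : (0:ℚ) ≤ _) with h | h
      · exact h
      · exact absurd h.symm hC
    have h1 : ((G.edgeFinset.filter (fun e => ∀ v ∈ e, v ∉ D)).card : ℚ)
        + (Hᶜ.edgeFinset.card : ℚ) = (W.card.choose 2 : ℚ) := by exact_mod_cast hsumEdges
    have h2 : 2 * (Hᶜ.edgeFinset.card : ℚ) ≤ lam := by exact_mod_cast hbound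
    constructor
    · rw [div_le_div_iff_of_pos_right hCpos]
      linarith
    · rw [div_le_one hCpos]
      linarith
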